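/- Let c > 0 and define θ(u) = arctan(2c e^{cu}/(1−c²+e^{2cu})) on an interval where 1−c²+e^{2cu} > 0, and λ(u) = θ'(u)/sin θ(u). Then λ and θ satisfy λ² + sin²θ = c² and θ' = λ sin θ. -/

import Mathlib

open Real

/-- θ(u) = arctan(2c e^{cu}/(1−c²+e^{2cu})). -/
noncomputable def thetaS (c : ℝ) (u : ℝ) : ℝ :=
  arctan (2 * c * exp (c * u) / (1 - c^2 + exp (2 * c * u)))

/-- λ(u) = θ'(u)/sin θ(u). -/
noncomputable def lamS (c : ℝ) (u : ℝ) : ℝ := deriv (thetaS c) u / sin (thetaS c u)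

/-- With θ(u) = arctan(2c e^{cu}/(1−c²+e^{2cu})) (where 1−c²+e^{2cu} > 0) and
λ = θ'/sin θ, one has λ² + sin²θ = c² and θ' = λ sin θ. -/
theorem theta_lambda_solution_sphere (c : ℝ) (hc : 0 < c) (u : ℝ)
    (hu : 1 - c^2 + exp (2 * c * u) > 0) :
    lamS c u ^ 2 + sin (thetaS c u) ^ 2 = c ^ 2
    ∧ deriv (thetaS c) u = lamS c u * sin (thetaS c u) := by
  have hE2 : exp (2 * c * u) = exp (c * u) ^ 2 := by
    rw [two_mul, add_mul, exp_add, sq]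
  set E := exp (c * u) with hE
  have hEpos : 0 < E := exp_pos _
  set D : ℝ := 1 - c ^ 2 + exp (2 * c * u) with hDdef
  have hD : 0 < D := hu
  have hDne : D ≠ 0 := ne_of_gt hD
  -- the inner function g and its derivative
  set g : ℝ := 2 * c * E / D with hgdef
  have hgpos : 0 < g := div_pos (by positivity) hD
  set g' : ℝ := (2 * c * (E * c) * D - 2 * c * E * (exp (2 * c * u) * (2 * c))) / D ^ 2
    with hg'def
  have h1 : HasDerivAt (fun x : ℝ => c * x) c u := by
    simpa using (hasDerivAt_id u).const_mul c
  have hexp : HasDerivAt (fun x => exp (c * x)) (E * c) u := h1.exp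
  have h2 : HasDerivAt (fun x : ℝ => 2 * c * x) (2 * c) u := by
    simpa using (hasDerivAt_id u).const_mul (2 * c)
  have hexp2 : HasDerivAt (fun x => exp (2 * c * x)) (exp (2 * c * u) * (2 * c)) u := h2.exp
  have hN : HasDerivAt (fun x => 2 * c * exp (c * x)) (2 * c * (E * c)) u :=
    hexp.const_mul (2 * c)
  have hDen : HasDerivAt (fun x => 1 - c ^ 2 + exp (2 * c * x))
      (exp (2 * c * u) * (2 * c)) u := hexp2.const_add _
  have hg : HasDerivAt (fun x => 2 * c * exp (c * x) / (1 - c ^ 2 + exp (2 * c * x))) g' u :=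
    hN.div hDen hDne
  have hθ : HasDerivAt (thetaS c) (1 / (1 + g ^ 2) * g') u := by
    have := (Real.hasDerivAt_arctan g).comp u (by simpa [hgdef] using hg)
    have hfun : thetaS c = arctan ∘ fun x => 2 * c * exp (c * x) / (1 - c ^ 2 + exp (2 * c * x)) := by
      funext x; rfl
    rw [hfun]
    simpa [thetaS, Function.comp, hgdef] using this
  have hderiv : deriv (thetaS c) u = 1 / (1 + g ^ 2) * g' := hθ.deriv
  have hsin : sin (thetaS c u) = g / Real.sqrt (1 + g ^ 2) := by
    rw [thetaS, Real.sin_arctan]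
  have hPpos : (0 : ℝ) < 1 + g ^ 2 := by positivity
  have hSpos : 0 < Real.sqrt (1 + g ^ 2) := Real.sqrt_pos.mpr hPpos
  have hsinpos : 0 < sin (thetaS c u) := by
    rw [hsin]; exact div_pos hgpos hSpos
  have hsne : sin (thetaS c u) ≠ 0 := ne_of_gt hsinpos
  have hs2 : sin (thetaS c u) ^ 2 = g ^ 2 / (1 + g ^ 2) := by
    rw [hsin, div_pow, Real.sq_sqrt hPpos.le]
  -- the key algebraic identity
  have key : (deriv (thetaS c) u) ^ 2 + sin (thetaS c u) ^ 2 * sin (thetaS c u) ^ 2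
      = c ^ 2 * sin (thetaS c u) ^ 2 := by
    rw [hderiv, hs2, hgdef, hg'def, hDdef, hE2]
    have hD' : (1 : ℝ) - c ^ 2 + E ^ 2 > 0 := by rw [hDdef, hE2] at hD; exact hD
    have hP' : (0 : ℝ) < 1 + (2 * c * E / (1 - c ^ 2 + E ^ 2)) ^ 2 := by positivity
    field_simp
    ring
  constructor
  · have : lamS c u ^ 2 = (deriv (thetaS c) u) ^ 2 / sin (thetaS c u) ^ 2 := by
      rw [lamS, div_pow]
    rw [this]
    field_simp
    linarith [key]
  · rw [lamS, div_mul_cancel₀ _ hsne]
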